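/- The maps Δ and ε make 𝒜 a coalgebra over R₀: Δ is coassociative, (Δ ⊗ id)∘Δ = (id ⊗ Δ)∘Δ, and ε is a counit for Δ, i.e. (ε ⊗ id)∘Δ = id_𝒜 = (id ⊗ ε)∘Δ. -/

import Mathlib

open TensorProduct

noncomputable section

/-- `R₀ = ℚ[a,h]`. -/
abbrev R0 : Type := MvPolynomial (Fin 2) ℚ

noncomputable def aP : R0 := MvPolynomial.X 0
noncomputable def hP : R0 := MvPolynomial.X 1

noncomputable def quadPoly : Polynomial R0 :=
  Polynomial.X ^ 2 - Polynomial.C hP * Polynomial.X - Polynomial.C aP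

/-- `𝒜 = R₀[X]/(X² − h·X − a)`. -/
abbrev Afr : Type := AdjoinRoot quadPoly

noncomputable def Xa : Afr := AdjoinRoot.root quadPoly

lemma quadPoly_monic : quadPoly.Monic := by unfold quadPoly; monicity!

lemma quadPoly_degree : quadPoly.degree = 2 := by unfold quadPoly; compute_degree!

lemma afr_decomp (u : Afr) : ∃ p q : R0, u = p • (1 : Afr) + q • Xa := by
  obtain ⟨f, rfl⟩ := AdjoinRoot.mk_surjective u
  have hmod : AdjoinRoot.mk quadPoly f = AdjoinRoot.mk quadPoly (f %ₘ quadPoly) := by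
    conv_lhs => rw [← Polynomial.modByMonic_add_div f quadPoly]
    simp
  have hdeg : (f %ₘ quadPoly).degree < 2 := by
    rw [← quadPoly_degree]
    exact Polynomial.degree_modByMonic_lt f quadPoly_monic
  have hdeg1 : (f %ₘ quadPoly).degree ≤ 1 := by
    by_contra hcon
    push_neg at hcon
    have h2 : (1 + 1 : WithBot ℕ) ≤ (f %ₘ quadPoly).degree := Nat.WithBot.add_one_le_of_lt hcon
    norm_num at h2
    exact absurd hdeg (not_lt.mpr h2)
  refine ⟨(f %ₘ quadPoly).coeff 0, (f %ₘ quadPoly).coeff 1, ?_⟩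
  rw [hmod]
  conv_lhs => rw [Polynomial.eq_X_add_C_of_degree_le_one hdeg1]
  rw [map_add, map_mul]
  simp only [map_add, Xa, Algebra.smul_def, AdjoinRoot.algebraMap_eq, AdjoinRoot.mk_C, AdjoinRoot.mk_X, map_mul]
  ring

set_option maxHeartbeats 1000000 in
set_option synthInstance.maxHeartbeats 400000 in
/-- `Δ` and `ε` make `𝒜` a coalgebra over `R₀`: `Δ` is coassociative and `ε`
is a counit for `Δ`. -/
theorem stmt_3 (Δ : Afr →ₗ[R0] Afr ⊗[R0] Afr)
    (hΔ1 : Δ 1 = (1 : Afr) ⊗ₜ[R0] Xa + Xa ⊗ₜ[R0] (1 : Afr) - hP • ((1 : Afr) ⊗ₜ[R0] (1 : Afr)))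
    (hΔX : Δ Xa = Xa ⊗ₜ[R0] Xa + aP • ((1 : Afr) ⊗ₜ[R0] (1 : Afr)))
    (ε : Afr →ₗ[R0] R0) (hε1 : ε 1 = 0) (hεX : ε Xa = 1) :
    (∀ u : Afr,
        (TensorProduct.assoc R0 Afr Afr Afr) ((TensorProduct.map Δ LinearMap.id) (Δ u)) =
          (TensorProduct.map LinearMap.id Δ) (Δ u)) ∧
      (∀ u : Afr, (TensorProduct.lid R0 Afr) ((TensorProduct.map ε LinearMap.id) (Δ u)) = u) ∧
      (∀ u : Afr, (TensorProduct.rid R0 Afr) ((TensorProduct.map LinearMap.id ε) (Δ u)) = u) := by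
  refine ⟨?_, ?_, ?_⟩ <;>
  · intro u
    obtain ⟨p, q, rfl⟩ := afr_decomp u
    simp only [map_add, map_sub, map_smul, hΔ1, hΔX, TensorProduct.map_tmul,
      TensorProduct.tmul_add, TensorProduct.add_tmul, TensorProduct.tmul_sub,
      TensorProduct.sub_tmul, TensorProduct.tmul_smul, ← TensorProduct.smul_tmul',
      TensorProduct.assoc_tmul, TensorProduct.lid_tmul, TensorProduct.rid_tmul,
      LinearMap.id_coe, id_eq, hε1, hεX, zero_smul, one_smul, smul_zero, smul_eq_mul,
      mul_one, TensorProduct.zero_tmul, TensorProduct.tmul_zero, map_zero, add_zero,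
      zero_add, sub_zero]
    all_goals module

end
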